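/- Let N ≥ 2 and β ∈ ℝ. The function Q₊(x) = x_N |x|^{-(N+β)/2} satisfies ΔQ₊ + β (x·∇Q₊)/|x|² = -[((N-2+β)/2)² + (N-1)] Q₊/|x|² on the open upper half-space {x_N > 0}. -/

import Mathlib

open MeasureTheory Set

/-- The Laplacian of a function on `ℝ^N`, as the sum of second partial derivatives. -/
noncomputable def lap {N : ℕ} {F : Type*} [NormedAddCommGroup F] [NormedSpace ℝ F]
    (u : EuclideanSpace ℝ (Fin N) → F) (x : EuclideanSpace ℝ (Fin N)) : F :=
  ∑ i : Fin N, fderiv ℝ (fderiv ℝ u) x (EuclideanSpace.single i 1)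
    (EuclideanSpace.single i 1)


section aux
variable {N : ℕ} (i0 : Fin N) (p : ℝ)

noncomputable def Dmap (y : EuclideanSpace ℝ (Fin N)) :
    EuclideanSpace ℝ (Fin N) →L[ℝ] ℝ :=
  (2 * (y i0 * (p * (‖y‖ ^ 2 : ℝ) ^ (p - 1)))) • innerSL ℝ y
    + ((‖y‖ ^ 2 : ℝ) ^ p) • (EuclideanSpace.proj i0 : EuclideanSpace ℝ (Fin N) →L[ℝ] ℝ)

lemma hasFDerivU (y : EuclideanSpace ℝ (Fin N)) :
    HasFDerivAt (fun z : EuclideanSpace ℝ (Fin N) => (‖z‖ ^ 2 : ℝ))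
      ((2:ℝ) • innerSL ℝ y) y := by
  have := (hasStrictFDerivAt_norm_sq y).hasFDerivAt
  exact this.congr_fderiv (by ext w; simp)

lemma hasFDerivQ (y : EuclideanSpace ℝ (Fin N)) (hy : y ≠ 0) :
    HasFDerivAt (fun z : EuclideanSpace ℝ (Fin N) => z i0 * (‖z‖ ^ 2 : ℝ) ^ p)
      (Dmap i0 p y) y := by
  have hy2 : (‖y‖ ^ 2 : ℝ) ≠ 0 := by
    have : ‖y‖ ≠ 0 := norm_ne_zero_iff.mpr hy
    positivity
  have hg := (hasFDerivU y).rpow_const (p := p) (Or.inl hy2)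
  have hP : HasFDerivAt (fun z : EuclideanSpace ℝ (Fin N) => z i0)
      (EuclideanSpace.proj i0 : EuclideanSpace ℝ (Fin N) →L[ℝ] ℝ) y :=
    (EuclideanSpace.proj i0 : EuclideanSpace ℝ (Fin N) →L[ℝ] ℝ).hasFDerivAt
  have := hP.mul hg
  refine this.congr_fderiv ?_
  ext w
  simp [Dmap, innerSL_apply_apply]
  ring
end aux

section aux2
variable {N : ℕ} (i0 : Fin N) (p : ℝ)

lemma lap_eval (x : EuclideanSpace ℝ (Fin N)) (hx0 : x ≠ 0) :
    ∑ i : Fin N, fderiv ℝ (Dmap i0 p) x (EuclideanSpace.single i 1)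
        (EuclideanSpace.single i 1)
      = (N : ℝ) * (2 * (x i0 * (p * (‖x‖ ^ 2 : ℝ) ^ (p - 1))))
        + (4 * p * (p - 1) * (‖x‖ ^ 2 : ℝ) ^ (p - 1 - 1) * x i0) * ‖x‖ ^ 2
        + (4 * p * (‖x‖ ^ 2 : ℝ) ^ (p - 1)) * x i0 := by
  have hy2 : (‖x‖ ^ 2 : ℝ) ≠ 0 := by
    have : ‖x‖ ≠ 0 := norm_ne_zero_iff.mpr hx0
    positivity
  have hP : HasFDerivAt (fun z : EuclideanSpace ℝ (Fin N) => z i0)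
      (EuclideanSpace.proj i0 : EuclideanSpace ℝ (Fin N) →L[ℝ] ℝ) x :=
    (EuclideanSpace.proj i0 : EuclideanSpace ℝ (Fin N) →L[ℝ] ℝ).hasFDerivAt
  have h1 := (hasFDerivU x).rpow_const (p := p - 1) (Or.inl hy2)
  have h2 := h1.const_mul p
  have h3 := hP.mul h2
  have h4 := h3.const_mul (2:ℝ)
  have hinner : HasFDerivAt (fun z : EuclideanSpace ℝ (Fin N) => innerSL ℝ z)
      (innerSL ℝ (E := EuclideanSpace ℝ (Fin N))) x :=
    (innerSL ℝ (E := EuclideanSpace ℝ (Fin N))).hasFDerivAt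
  have hg := (hasFDerivU x).rpow_const (p := p) (Or.inl hy2)
  have term1 := h4.smul hinner
  have term2 := hg.smul (hasFDerivAt_const
      (EuclideanSpace.proj i0 : EuclideanSpace ℝ (Fin N) →L[ℝ] ℝ) x)
  have hD : HasFDerivAt (Dmap i0 p) _ x := term1.add term2
  have key : ∀ i : Fin N,
      fderiv ℝ (Dmap i0 p) x (EuclideanSpace.single i 1) (EuclideanSpace.single i 1)
        = 2 * (x i0 * (p * (‖x‖ ^ 2 : ℝ) ^ (p - 1)))
          + (4 * p * (p - 1) * (‖x‖ ^ 2 : ℝ) ^ (p - 1 - 1) * x i0) * (x i * x i)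
          + (4 * p * (‖x‖ ^ 2 : ℝ) ^ (p - 1)) * (if i = i0 then x i else 0) := by
    intro i
    rw [hD.fderiv]
    by_cases h : i = i0
    · subst h
      simp [real_inner_self_eq_norm_sq, EuclideanSpace.single_apply, innerSL_apply_apply,
        real_inner_comm x, EuclideanSpace.inner_single_right,
        EuclideanSpace.inner_single_left]
      erw [innerSL_apply_apply]
      simp
      ring
    · have h' : ¬ i0 = i := fun hh => h hh.symm
      simp [h, h', real_inner_self_eq_norm_sq, EuclideanSpace.single_apply, innerSL_apply_apply,
        real_inner_comm x, EuclideanSpace.inner_single_right,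
        EuclideanSpace.inner_single_left]
      erw [innerSL_apply_apply]
      simp
      ring
  have hsum : ∑ i : Fin N, x i * x i = (‖x‖ ^ 2 : ℝ) := by
    rw [EuclideanSpace.norm_eq, Real.sq_sqrt (by positivity)]
    simp [sq]
  simp only [key]
  rw [Finset.sum_add_distrib, Finset.sum_add_distrib, Finset.sum_const,
    Finset.card_univ, Fintype.card_fin, ← Finset.mul_sum, ← Finset.mul_sum,
    hsum, Finset.sum_ite_eq']
  simp [nsmul_eq_mul]
end aux2


/-- `Q₊(x) = x_N |x|^{-(N+β)/2}` satisfies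
`ΔQ₊ + β (x·∇Q₊)/|x|² = -[((N-2+β)/2)² + (N-1)] Q₊/|x|²` on the upper half-space. -/
theorem stmt16 {N : ℕ} (hN : 2 ≤ N) (β : ℝ)
    (Q : EuclideanSpace ℝ (Fin N) → ℝ)
    (hQ : Q = fun x => x ⟨N - 1, by omega⟩ * ‖x‖ ^ (-(((N : ℝ) + β) / 2)))
    (x : EuclideanSpace ℝ (Fin N)) (hx : 0 < x ⟨N - 1, by omega⟩) :
    lap Q x + β * fderiv ℝ Q x x / ‖x‖ ^ 2 =
      -(((((N : ℝ) - 2 + β) / 2) ^ 2 + ((N : ℝ) - 1))) * Q x / ‖x‖ ^ 2 := by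
  have hNR : (1:ℝ) ≤ N := by exact_mod_cast Nat.one_le_of_lt hN
  set i0 : Fin N := ⟨N - 1, by omega⟩ with hi0
  set p : ℝ := -(((N : ℝ) + β) / 4) with hp
  have hx0 : x ≠ 0 := by
    intro h
    rw [h] at hx
    simp at hx
  have hs : (0:ℝ) < ‖x‖ ^ 2 := by
    have : ‖x‖ ≠ 0 := norm_ne_zero_iff.mpr hx0
    positivity
  have hpow : ∀ y : EuclideanSpace ℝ (Fin N),
      ‖y‖ ^ (-(((N : ℝ) + β) / 2)) = ((‖y‖ ^ 2 : ℝ)) ^ p := by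
    intro y
    rw [← Real.rpow_natCast ‖y‖ 2, ← Real.rpow_mul (norm_nonneg y)]
    congr 1
    rw [hp]; push_cast; ring
  have hQ' : Q = fun y : EuclideanSpace ℝ (Fin N) => y i0 * ((‖y‖ ^ 2 : ℝ)) ^ p := by
    rw [hQ]; funext y; rw [hpow]
  have hfQ : ∀ y : EuclideanSpace ℝ (Fin N), y ≠ 0 → fderiv ℝ Q y = Dmap i0 p y := by
    intro y hy
    rw [hQ']
    exact (hasFDerivQ i0 p y hy).fderiv
  have hev : fderiv ℝ Q =ᶠ[nhds x] Dmap i0 p :=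
    Filter.eventually_of_mem (isOpen_compl_singleton.mem_nhds hx0) fun y hy => hfQ y hy
  have hlap : lap Q x
      = (N : ℝ) * (2 * (x i0 * (p * (‖x‖ ^ 2 : ℝ) ^ (p - 1))))
        + (4 * p * (p - 1) * (‖x‖ ^ 2 : ℝ) ^ (p - 1 - 1) * x i0) * ‖x‖ ^ 2
        + (4 * p * (‖x‖ ^ 2 : ℝ) ^ (p - 1)) * x i0 := by
    unfold lap
    rw [show fderiv ℝ (fderiv ℝ Q) x = fderiv ℝ (Dmap i0 p) x from hev.fderiv_eq]
    exact lap_eval i0 p x hx0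
  have hgrad : fderiv ℝ Q x x
      = 2 * (x i0 * (p * (‖x‖ ^ 2 : ℝ) ^ (p - 1))) * ‖x‖ ^ 2
        + (‖x‖ ^ 2 : ℝ) ^ p * x i0 := by
    rw [hfQ x hx0]
    simp only [Dmap, ContinuousLinearMap.add_apply, ContinuousLinearMap.smul_apply,
      innerSL_apply_apply, smul_eq_mul, PiLp.proj_apply]
    rw [real_inner_self_eq_norm_sq]
  have hQx : Q x = x i0 * ((‖x‖ ^ 2 : ℝ)) ^ p := by rw [hQ']
  rw [hlap, hgrad, hQx]
  have e1 : ((‖x‖ ^ 2 : ℝ)) ^ (p - 1) = ((‖x‖ ^ 2 : ℝ)) ^ p / (‖x‖ ^ 2) := by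
    rw [Real.rpow_sub hs, Real.rpow_one]
  have e2 : ((‖x‖ ^ 2 : ℝ)) ^ (p - 1 - 1) = ((‖x‖ ^ 2 : ℝ)) ^ p / (‖x‖ ^ 2 * ‖x‖ ^ 2) := by
    rw [Real.rpow_sub hs, Real.rpow_sub hs, Real.rpow_one]
    ring
  rw [e1, e2, hp]
  field_simp
  ring
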